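/- If a sequence π of distinct keys avoids the pattern (2,1,3) (i.e., there are no indices i < j < k with π_j < π_i < π_k), then π equals the reversed preorder of BST(π), where the reversed preorder of a binary tree is the empty sequence for the empty tree and otherwise is (root) ++ (reversed preorder of the right subtree) ++ (reversed preorder of the left subtree). Equivalently, π is the preorder of the mirror image of BST(π). -/

import Mathlib

/-- Binary trees with keys at internal nodes. -/
inductive BT (α : Type) where
  | leaf : BT α
  | node : BT α → α → BT α → BT α
deriving DecidableEq

namespace BT

variable {α : Type} [LinearOrder α]

/-- The list of keys of a tree, in symmetric (inorder) order. -/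
def keys : BT α → List α
  | leaf => []
  | node l v r => keys l ++ v :: keys r

/-- The number of nodes of a tree. -/
def size : BT α → ℕ
  | leaf => 0
  | node l _ r => size l + size r + 1

/-- The symmetric-order (binary search tree) property. -/
def IsBST : BT α → Prop
  | leaf => True
  | node l v r => (∀ x ∈ l.keys, x < v) ∧ (∀ x ∈ r.keys, v < x) ∧ l.IsBST ∧ r.IsBST

/-- Preorder of a binary tree: root, then left subtree, then right subtree. -/
def preorder : BT α → List α
  | leaf => []
  | node l v r => v :: (preorder l ++ preorder r)

/-- Postorder of a binary tree: left subtree, right subtree, then root. -/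
def postorder : BT α → List α
  | leaf => []
  | node l v r => postorder l ++ postorder r ++ [v]

/-- Reversed preorder: root, then right subtree, then left subtree
(the preorder of the mirror image). -/
def revPreorder : BT α → List α
  | leaf => []
  | node l v r => v :: (revPreorder r ++ revPreorder l)

/-- Standard leaf insertion into a binary search tree. -/
def insertKey : BT α → α → BT α
  | leaf, x => node leaf x leaf
  | node l v r, x =>
    if x < v then node (insertKey l x) v r
    else if v < x then node l v (insertKey r x)
    else node l v r

/-- The depth (number of edges from the root) of the node with key `x`,
located by binary search. -/
def depthOf : BT α → α → ℕ
  | leaf, _ => 0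
  | node l v r, x =>
    if x < v then depthOf l x + 1
    else if v < x then depthOf r x + 1
    else 0

/-- The search path to the key `x`: `false` records a step to a left child,
`true` a step to a right child. -/
def pathTo : BT α → α → List Bool
  | leaf, _ => []
  | node l v r, x =>
    if x < v then false :: pathTo l x
    else if v < x then true :: pathTo r x
    else []

/-- The left-depth of the node with key `x`: the number of left-child edges
on the path from the root to it. -/
def leftDepthKey : BT α → α → ℕ
  | leaf, _ => 0
  | node l v r, x =>
    if x < v then leftDepthKey l x + 1
    else if v < x then leftDepthKey r x
    else 0

/-- The subtree rooted at the node with key `x` (empty if `x` is absent). -/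
def subtreeAt : BT α → α → BT α
  | leaf, _ => leaf
  | node l v r, x =>
    if x < v then subtreeAt l x
    else if v < x then subtreeAt r x
    else node l v r

/-- The key at the root, if any. -/
def rootKey : BT α → Option α
  | leaf => none
  | node _ v _ => some v

/-- The key of the parent of the node with key `x`, if any. -/
def parentKey : BT α → α → Option α
  | leaf, _ => none
  | node l v r, x =>
    if x < v then (if l.rootKey = some x then some v else l.parentKey x)
    else if v < x then (if r.rootKey = some x then some v else r.parentKey x)
    else none

/-- A step of the context (zipper) describing the search path from the root
to the current subtree: `inL v r` means the current subtree is the left child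
of a node with key `v` and right subtree `r`; `inR l v` means it is the right
child of a node with key `v` and left subtree `l`. -/
inductive Ctx (α : Type) where
  | inL : α → BT α → Ctx α
  | inR : BT α → α → Ctx α

/-- Descend along the search path for `x`, recording the context.
The head of the returned list corresponds to the immediate parent. -/
def descend : BT α → α → List (Ctx α) → List (Ctx α) × BT α
  | leaf, _, acc => (acc, leaf)
  | node l v r, x, acc =>
    if x < v then descend l x (Ctx.inL v r :: acc)
    else if v < x then descend r x (Ctx.inR l v :: acc)
    else (acc, node l v r)

/-- Reattach a subtree into its context, with no rotations. -/
def rebuild : BT α → List (Ctx α) → BT α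
  | t, [] => t
  | t, Ctx.inL v r :: cs => rebuild (node t v r) cs
  | t, Ctx.inR l v :: cs => rebuild (node l v t) cs

/-- Bottom-up splay steps: repeatedly apply zig / zig-zig / zig-zag steps to
the current subtree (rooted at the node being splayed) until the context is
exhausted. -/
def splayLoop : BT α → List (Ctx α) → BT α
  | t, [] => t
  | node a x b, [Ctx.inL v r] => node a x (node b v r)          -- zig
  | node a x b, [Ctx.inR l v] => node (node l v a) x b          -- zig
  | node a x b, Ctx.inL p pr :: Ctx.inL g gr :: cs =>           -- zig-zig
      splayLoop (node a x (node b p (node pr g gr))) cs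
  | node a x b, Ctx.inL p pr :: Ctx.inR gl g :: cs =>           -- zig-zag
      splayLoop (node (node gl g a) x (node b p pr)) cs
  | node a x b, Ctx.inR pl p :: Ctx.inR gl g :: cs =>           -- zig-zig
      splayLoop (node (node (node gl g pl) p a) x b) cs
  | node a x b, Ctx.inR pl p :: Ctx.inL g gr :: cs =>           -- zig-zag
      splayLoop (node (node pl p a) x (node b g gr)) cs
  | leaf, cs => rebuild leaf cs   -- unreachable when the splayed key is present

/-- Splaying the key `x`: if `x` occurs in the tree, bring its node to the
root by bottom-up splay steps; otherwise leave the tree unchanged. -/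
def splay (x : α) (t : BT α) : BT α :=
  match descend t x [] with
  | (_, leaf) => t
  | (cs, found) => splayLoop found cs

/-- `α`-weight-balance in the sense of Nievergelt–Reingold:
at each node, `min(|L|,|R|) + 1 ≥ α * (|x| + 1)`. -/
def WeightBalanced (a : ℝ) : BT α → Prop
  | leaf => True
  | node l _ r =>
      (min l.size r.size + 1 : ℝ) ≥ a * ((l.size + r.size + 1 : ℕ) + 1 : ℝ) ∧
      WeightBalanced a l ∧ WeightBalanced a r

/-- The rank of `x` in `t`: the number of keys of `t` that are `≤ x`. -/
def rank (t : BT α) (x : α) : ℕ := (t.keys.filter (fun y => y ≤ x)).length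

end BT

section Defs

variable {α : Type} [LinearOrder α]

/-- The insertion tree of a sequence: leaf-insert the keys in order. -/
def bstOf (π : List α) : BT α := π.foldl BT.insertKey BT.leaf

/-- `q` is a sub-root: a node of `t` not yet touched whose parent is touched,
where `touched` is the list of touched keys. -/
def IsSubRoot (t : BT α) (touched : List α) (q : α) : Prop :=
  q ∈ t.keys ∧ q ∉ touched ∧ ∃ p, t.parentKey q = some p ∧ p ∈ touched

/-- π avoids the pattern (2,3,1). -/
def Avoids231 (π : List α) : Prop :=
  ¬ ∃ i j k : Fin π.length, i < j ∧ j < k ∧ π.get k < π.get i ∧ π.get i < π.get j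

/-- π avoids the pattern (3,1,2). -/
def Avoids312 (π : List α) : Prop :=
  ¬ ∃ i j k : Fin π.length, i < j ∧ j < k ∧ π.get j < π.get k ∧ π.get k < π.get i

/-- π avoids the pattern (2,1,3). -/
def Avoids213 (π : List α) : Prop :=
  ¬ ∃ i j k : Fin π.length, i < j ∧ j < k ∧ π.get j < π.get i ∧ π.get i < π.get k

/-- π contains a strictly decreasing subsequence of length `k`. -/
def HasDecreasingSubseq (π : List α) (k : ℕ) : Prop :=
  ∃ s : List α, s.Sublist π ∧ s.length = k ∧ s.Chain' (· > ·)

/-- Splay the keys of a list in order, starting from `t`. -/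
def splaySeq (π : List α) (t : BT α) : BT α := π.foldl (fun s x => BT.splay x s) t

/-- The cost of splaying a sequence of keys starting from `t`:
each splay costs the current depth of the requested key plus one. -/
def splayCost : BT α → List α → ℕ
  | _, [] => 0
  | t, x :: xs => (t.depthOf x + 1) + splayCost (BT.splay x t) xs

/-- The cost of insertion splaying a sequence of keys starting from `t`:
each key is leaf-inserted, then the new node is splayed, at a cost of
its depth after insertion plus one. -/
def insertSplayCost : BT α → List α → ℕ
  | _, [] => 0
  | t, x :: xs =>
    ((t.insertKey x).depthOf x + 1) + insertSplayCost (BT.splay x (t.insertKey x)) xs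

/-- `DF rk xs` = Σ_{i≥2} log₂(|rk(x_i) − rk(x_{i−1})| + 1). -/
noncomputable def DF (rk : α → ℕ) (xs : List α) : ℝ :=
  ((xs.zip xs.tail).map
    (fun p => Real.logb 2 (|(rk p.2 : ℝ) - (rk p.1 : ℝ)| + 1))).sum

/-- The rank of `x` within the sequence `σ` itself. -/
def rankIn (σ : List α) (x : α) : ℕ := (σ.filter (fun y => y ≤ x)).length

/-- The dynamic-finger sum of a sequence, with ranks computed in the
sequence itself. -/
noncomputable def DFseq (σ : List α) : ℝ := DF (rankIn σ) σ

end Defs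


section ProofAux
variable {α : Type} [LinearOrder α]

lemma avoids213_sublist {σ π : List α} (h : σ.Sublist π) (hav : Avoids213 π) :
    Avoids213 σ := by
  rintro ⟨i, j, k, hij, hjk, h1, h2⟩
  obtain ⟨f, hf⟩ := List.sublist_iff_exists_fin_orderEmbedding_get_eq.mp h
  exact hav ⟨f i, f j, f k, f.strictMono hij, f.strictMono hjk,
    by rw [← hf, ← hf]; exact h1, by rw [← hf, ← hf]; exact h2⟩

lemma avoids213_no_pattern {π : List α} (hav : Avoids213 π) {a b c : α}
    (h : ([a, b, c] : List α).Sublist π) (h1 : b < a) (h2 : a < c) : False := by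
  obtain ⟨f, hf⟩ := List.sublist_iff_exists_fin_orderEmbedding_get_eq.mp h
  refine hav ⟨f ⟨0, by norm_num⟩, f ⟨1, by norm_num⟩, f ⟨2, by norm_num⟩,
    f.strictMono (Fin.mk_lt_mk.mpr (by norm_num)),
    f.strictMono (Fin.mk_lt_mk.mpr (by norm_num)), ?_, ?_⟩
  · rw [← hf, ← hf]; exact h1
  · rw [← hf, ← hf]; exact h2

lemma foldl_insert_lt (L : List α) : ∀ (l r : BT α) (v : α), (∀ y ∈ L, y < v) →
    L.foldl BT.insertKey (BT.node l v r) = BT.node (L.foldl BT.insertKey l) v r := by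
  induction L with
  | nil => intros; rfl
  | cons y t ih =>
    intro l r v h
    have hy : y < v := h y (by simp)
    simp only [List.foldl_cons, BT.insertKey, if_pos hy]
    exact ih _ r v (fun z hz => h z (by simp [hz]))

lemma foldl_insert_gt (G : List α) : ∀ (l r : BT α) (v : α), (∀ y ∈ G, v < y) →
    G.foldl BT.insertKey (BT.node l v r) = BT.node l v (G.foldl BT.insertKey r) := by
  induction G with
  | nil => intros; rfl
  | cons y t ih =>
    intro l r v h
    have hy : v < y := h y (by simp)
    simp only [List.foldl_cons, BT.insertKey, if_neg (asymm hy), if_pos hy]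
    exact ih l _ v (fun z hz => h z (by simp [hz]))

lemma split_eq (x : α) : ∀ (rest : List α),
    (∀ a b : α, ([a, b] : List α).Sublist rest → a < x → ¬ x < b) → x ∉ rest →
    rest = rest.filter (fun y => decide (x < y)) ++ rest.filter (fun y => decide (y < x)) := by
  intro rest
  induction rest with
  | nil => intros; rfl
  | cons y t ih =>
    intro h hx
    have hyx : y ≠ x := fun e => hx (by simp [e])
    have hxt : x ∉ t := fun e => hx (by simp [e])
    rcases hyx.lt_or_gt with hlt | hgt
    · -- y < x : all of t is < x
      have ht : ∀ b ∈ y :: t, b < x := by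
        intro b hb
        rcases List.mem_cons.mp hb with rfl | hb
        · exact hlt
        · have hsub : ([y, b] : List α).Sublist (y :: t) :=
            (List.singleton_sublist.mpr hb).cons₂ y
          have hnb := h y b hsub hlt
          exact lt_of_le_of_ne (not_lt.mp hnb) (fun e => hxt (e ▸ hb))
      have h1 : (y :: t).filter (fun z => decide (x < z)) = [] := by
        rw [List.filter_eq_nil_iff]
        intro b hb
        simpa using not_lt.mpr (ht b hb).le
      have h2 : (y :: t).filter (fun z => decide (z < x)) = y :: t := by
        rw [List.filter_eq_self]
        intro b hb
        simpa using ht b hb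
      rw [h1, h2]; rfl
    · -- x < y
      have hrec := ih (fun a b hs => h a b (hs.cons y)) hxt
      have hf1 : (y :: t).filter (fun z => decide (x < z))
          = y :: t.filter (fun z => decide (x < z)) := by
        simp [List.filter_cons, hgt]
      have hf2 : (y :: t).filter (fun z => decide (z < x))
          = t.filter (fun z => decide (z < x)) := by
        simp [List.filter_cons, not_lt.mpr hgt.le]
      rw [hf1, hf2, List.cons_append]
      exact congrArg (y :: ·) hrec

lemma avoids213_revPreorder_aux : ∀ (n : ℕ) (π : List α), π.length ≤ n → π.Nodup →
    Avoids213 π → (bstOf π).revPreorder = π := by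
  intro n
  induction n with
  | zero =>
    intro π h _ _
    rw [List.length_eq_zero_iff.mp (Nat.le_zero.mp h)]
    rfl
  | succ n ih =>
    intro π hlen hnd hav
    match π with
    | [] => rfl
    | x :: rest =>
      have hxrest : x ∉ rest := (List.nodup_cons.mp hnd).1
      have hrestnd : rest.Nodup := (List.nodup_cons.mp hnd).2
      set G := rest.filter (fun y => decide (x < y)) with hGdef
      set L := rest.filter (fun y => decide (y < x)) with hLdef
      have hpair : ∀ a b : α, ([a, b] : List α).Sublist rest → a < x → ¬ x < b := by
        intro a b hs ha hb
        exact avoids213_no_pattern hav (hs.cons₂ x) ha hb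
      have hsplit : rest = G ++ L := split_eq x rest hpair hxrest
      have hG : ∀ y ∈ G, x < y := by
        intro y hy
        simpa using List.of_mem_filter hy
      have hL : ∀ y ∈ L, y < x := by
        intro y hy
        simpa using List.of_mem_filter hy
      have hGsub : G.Sublist rest := List.filter_sublist
      have hLsub : L.Sublist rest := List.filter_sublist
      have hrlen : rest.length ≤ n := Nat.succ_le_succ_iff.mp hlen
      have hcons : rest.Sublist (x :: rest) := List.sublist_cons_self x rest
      have ihG : (bstOf G).revPreorder = G :=
        ih G (hGsub.length_le.trans hrlen) (hrestnd.sublist hGsub)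
          (avoids213_sublist (hGsub.trans hcons) hav)
      have ihL : (bstOf L).revPreorder = L :=
        ih L (hLsub.length_le.trans hrlen) (hrestnd.sublist hLsub)
          (avoids213_sublist (hLsub.trans hcons) hav)
      have hbst : bstOf (x :: rest) = BT.node (bstOf L) x (bstOf G) := by
        rw [hsplit]
        show (G ++ L).foldl BT.insertKey (BT.insertKey BT.leaf x) = _
        rw [List.foldl_append]
        show (L.foldl BT.insertKey (G.foldl BT.insertKey (BT.node BT.leaf x BT.leaf))) = _
        rw [foldl_insert_gt G _ _ _ hG, foldl_insert_lt L _ _ _ hL]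
        rfl
      rw [hbst]
      show x :: ((bstOf G).revPreorder ++ (bstOf L).revPreorder) = x :: rest
      rw [ihG, ihL, ← hsplit]

end ProofAux

/-- A (2,1,3)-avoiding sequence of distinct keys equals the reversed preorder
(i.e. the preorder of the mirror image) of its insertion tree. -/
theorem avoids213_revPreorder {α : Type} [LinearOrder α]
    (π : List α) (hnd : π.Nodup) (hav : Avoids213 π) :
    (bstOf π).revPreorder = π :=
  avoids213_revPreorder_aux π.length π le_rfl hnd hav
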